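/- Truth Lemma for C_nᴰ: let n ≥ 2 and let Δ ∈ W_can^{(n)} (i.e., Δ is ψ-saturated in C_nᴰ for some ψ). Then for all formulas α, β over Σ₁ᴰ: (1) α ∧ β ∈ Δ iff α, β ∈ Δ; (2) α ∨ β ∈ Δ iff α ∈ Δ or β ∈ Δ; (3) α → β ∈ Δ iff α ∉ Δ or β ∈ Δ; (4) if α ∉ Δ then ¬α ∈ Δ; (5) if ¬¬α ∈ Δ then α ∈ Δ; (6) if α ∉ Δ or ¬α ∉ Δ, then α¹ ∈ Δ and ¬(α¹) ∉ Δ; (7) if α, ¬α ∈ Δ then for every 1 ≤ i ≤ n: if α^i ∉ Δ then α^j ∈ Δ for every 1 ≤ j ≤ n with j ≠ i; (8) if α, ¬α ∈ Δ then there exists a unique 1 ≤ k ≤ n with α^k ∉ Δ; (9) α^{(n)} ∈ Δ iff α ∉ Δ or ¬α ∉ Δ; (10) Oα ∈ Δ iff α ∈ Δ' for every Δ' ∈ W_can^{(n)} with Δ R_can^{(n)} Δ'; (11) if α^{(n)} ∈ Δ then (Oα)^{(n)} ∈ Δ. -/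
import Mathlib


/-- Formulas over the signature Σ₁ᴰ = {∧, ∨, →, ¬, O}, with countably many
propositional variables. -/
inductive Form : Type
  | var : ℕ → Form
  | and : Form → Form → Form
  | or : Form → Form → Form
  | imp : Form → Form → Form
  | neg : Form → Form
  | obl : Form → Form

namespace Form

/-- α⁰ = α, α^{k+1} = ¬(α^k ∧ ¬α^k). -/
def pow (α : Form) : ℕ → Form
  | 0 => α
  | k + 1 => ((α.pow k).and (α.pow k).neg).neg

/-- α^{(n)} = α¹ ∧ … ∧ αⁿ (for n ≥ 1). -/
def bigPow (α : Form) : ℕ → Form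
  | 0 => α.pow 1
  | 1 => α.pow 1
  | m + 2 => (α.bigPow (m + 1)).and (α.pow (m + 2))

/-- ∼^{(n)}α := ¬α ∧ α^{(n)}. -/
def snn (n : ℕ) (α : Form) : Form := α.neg.and (α.bigPow n)

end Form

/-- The n+2 snapshots of the swap structure for C_nᴰ: T_n, t^n_0, …, t^n_{n-1}, F_n. -/
inductive SVn (n : ℕ) : Type
  | T : SVn n
  | t : Fin n → SVn n
  | F : SVn n
deriving DecidableEq

namespace SVn

/-- The coordinates of a snapshot, as an element of 2^{n+1} (0-indexed):
T_n = (1,0,1,…,1), t^n_i has its unique 0 at (0-indexed) position i+2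
(so t^n_{n-1} = (1,…,1)), and F_n = (0,1,…,1). -/
def coord {n : ℕ} : SVn n → Fin (n + 1) → Bool
  | .T, j => decide (j.val ≠ 1)
  | .t i, j => decide (j.val ≠ i.val + 2)
  | .F, j => decide (j.val ≠ 0)

/-- First coordinate z₁. -/
def p1 {n : ℕ} (z : SVn n) : Bool := z.coord 0

/-- Second coordinate z₂. -/
def p2 {n : ℕ} (z : SVn n) : Bool := z.coord 1

/-- Designated values D_n = A_n ∖ {F_n}, i.e. first coordinate 1. -/
def desig {n : ℕ} (z : SVn n) : Prop := z.p1 = true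

/-- Boolean values Boo_n = {T_n, F_n}. -/
def boo {n : ℕ} (z : SVn n) : Prop := z = SVn.T ∨ z = SVn.F

/-- Inconsistent values I_n = A_n ∖ Boo_n. -/
def incons {n : ℕ} (z : SVn n) : Prop := ∃ i : Fin n, z = SVn.t i

end SVn

/-- Boolean implication a ⊃ b. -/
def boolImp (a b : Bool) : Bool := !a || b

/-- Membership of c in a #̃ b for a binary connective # with Boolean counterpart
`op`: c₁ = a₁ op b₁, and moreover c ∈ Boo_n whenever a, b ∈ Boo_n. -/
def opCond {n : ℕ} (op : Bool → Bool → Bool) (c a b : SVn n) : Prop :=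
  c.p1 = op a.p1 b.p1 ∧ (a.boo → b.boo → c.boo)

/-- Swap Kripke pre-model conditions for C_nᴰ on a serial frame (W,R) with
valuations v_w : Form → A_n. -/
structure IsPreModelCnD (n : ℕ) {W : Type} (R : W → W → Prop)
    (v : W → Form → SVn n) : Prop where
  serial : ∀ w, ∃ w', R w w'
  and_ : ∀ w α β, opCond (· && ·) (v w (α.and β)) (v w α) (v w β)
  or_ : ∀ w α β, opCond (· || ·) (v w (α.or β)) (v w α) (v w β)
  imp_ : ∀ w α β, opCond boolImp (v w (α.imp β)) (v w α) (v w β)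
  neg_ : ∀ w α, (v w α.neg).p1 = (v w α).p2 ∧ (v w α.neg).p2 ≤ (v w α).p1
  obl_ : ∀ w α, ((v w α.obl).p1 = true ↔ ∀ w', R w w' → (v w' α).p1 = true)

/-- The RNmatrix restrictions on valuations:
(i) v_w(α) = t^n_0 implies v_w(α ∧ ¬α) = T_n;
(ii) for 1 ≤ k ≤ n−1, v_w(α) = t^n_k implies v_w(α ∧ ¬α) ∈ I_n and
v_w(α¹) = t^n_{k−1}. -/
def RestrCnD (n : ℕ) {W : Type} (v : W → Form → SVn n) : Prop :=
  (∀ (w : W) (α : Form) (h0 : 0 < n),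
      v w α = SVn.t ⟨0, h0⟩ → v w (α.and α.neg) = SVn.T) ∧
  (∀ (w : W) (α : Form) (k : ℕ) (hk : k < n), 1 ≤ k → v w α = SVn.t ⟨k, hk⟩ →
      (v w (α.and α.neg)).incons ∧ v w (α.pow 1) = SVn.t ⟨k - 1, by omega⟩)

/-- A swap Kripke model for C_nᴰ: a pre-model satisfying the restrictions (i), (ii)
and (iii): v_w(α) ∈ Boo_n implies v_w(Oα) ∈ Boo_n. -/
structure IsModelCnD (n : ℕ) {W : Type} (R : W → W → Prop)
    (v : W → Form → SVn n) : Prop where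
  pre : IsPreModelCnD n R v
  restr : RestrCnD n v
  booObl : ∀ w α, (v w α).boo → (v w α.obl).boo

/-- Theorems of the Hilbert calculus C_nᴰ: CPL⁺ axioms, (EM), (cf), (bc_n), (P_n),
(O-K), (D_n), (PO_n), with rules Modus Ponens and O-necessitation. -/
inductive ThmCnD (n : ℕ) : Form → Prop
  | A1 (α β : Form) : ThmCnD n (α.imp (β.imp α))
  | A2 (α β γ : Form) : ThmCnD n ((α.imp (β.imp γ)).imp ((α.imp β).imp (α.imp γ)))
  | A3 (α β : Form) : ThmCnD n (α.imp (β.imp (α.and β)))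
  | A4 (α β : Form) : ThmCnD n ((α.and β).imp α)
  | A5 (α β : Form) : ThmCnD n ((α.and β).imp β)
  | A6 (α β : Form) : ThmCnD n (α.imp (α.or β))
  | A7 (α β : Form) : ThmCnD n (β.imp (α.or β))
  | A8 (α β γ : Form) : ThmCnD n ((α.imp γ).imp ((β.imp γ).imp ((α.or β).imp γ)))
  | A9 (α β : Form) : ThmCnD n (((α.imp β).imp α).imp α)
  | EM (α : Form) : ThmCnD n (α.or α.neg)
  | cf (α : Form) : ThmCnD n (α.neg.neg.imp α)
  | bcn (α β : Form) : ThmCnD n ((α.bigPow n).imp (α.imp (α.neg.imp β)))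
  | Pn (α β : Form) : ThmCnD n (((α.bigPow n).and (β.bigPow n)).imp
      (((α.imp β).bigPow n).and (((α.or β).bigPow n).and ((α.and β).bigPow n))))
  | OK (α β : Form) : ThmCnD n ((α.imp β).obl.imp (α.obl.imp β.obl))
  | Dn (α : Form) : ThmCnD n (α.obl.imp (Form.snn n ((Form.snn n α).obl)))
  | POn (α : Form) : ThmCnD n ((α.bigPow n).imp (α.obl.bigPow n))
  | mp {α β : Form} : ThmCnD n (α.imp β) → ThmCnD n α → ThmCnD n β
  | nec {α : Form} : ThmCnD n α → ThmCnD n α.obl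

/-- conj γ [γ₂,…,γ_k] = γ ∧ γ₂ ∧ … ∧ γ_k -/
def conj (γ : Form) : List Form → Form
  | [] => γ
  | δ :: l => γ.and (conj δ l)

/-- Γ ⊢_{C_nᴰ} φ iff ⊢ φ or ⊢ (γ₁ ∧ … ∧ γ_k) → φ for some γ₁,…,γ_k ∈ Γ, k ≥ 1. -/
def DerivCnD (n : ℕ) (Γ : Set Form) (φ : Form) : Prop :=
  ThmCnD n φ ∨ ∃ (γ : Form) (l : List Form),
    (∀ δ ∈ γ :: l, δ ∈ Γ) ∧ ThmCnD n ((conj γ l).imp φ)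

/-- Δ is ψ-saturated in C_nᴰ: Δ ⊬ ψ and Δ ∪ {φ} ⊢ ψ for every φ ∉ Δ. -/
def SaturatedCnD (n : ℕ) (Δ : Set Form) (ψ : Form) : Prop :=
  ¬ DerivCnD n Δ ψ ∧ ∀ φ : Form, φ ∉ Δ → DerivCnD n (insert φ Δ) ψ

/-- The canonical worlds for C_nᴰ. -/
def WcanCnD (n : ℕ) : Set (Set Form) := {Δ | ∃ ψ, SaturatedCnD n Δ ψ}

/-- The canonical accessibility relation for C_nᴰ. -/
def RcanCnD (Δ Θ : Set Form) : Prop := ∀ φ : Form, φ.obl ∈ Δ → φ ∈ Θ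

section Machinery

open ThmCnD

variable {n : ℕ}

/-! ### Basic Hilbert-style combinators -/

lemma thm_ap {A B C : Form} (h1 : ThmCnD n (A.imp (B.imp C))) (h2 : ThmCnD n (A.imp B)) :
    ThmCnD n (A.imp C) := mp (mp (A2 A B C) h1) h2

lemma thm_id (A : Form) : ThmCnD n (A.imp A) := thm_ap (A1 A (A.imp A)) (A1 A A)

lemma thm_of_imp {A B : Form} (h : ThmCnD n B) : ThmCnD n (A.imp B) := mp (A1 B A) h

lemma thm_trans {A B C : Form} (h1 : ThmCnD n (A.imp B)) (h2 : ThmCnD n (B.imp C)) :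
    ThmCnD n (A.imp C) := thm_ap (thm_of_imp h2) h1

lemma thm_and_intro {A B C : Form} (h1 : ThmCnD n (A.imp B)) (h2 : ThmCnD n (A.imp C)) :
    ThmCnD n (A.imp (B.and C)) := thm_ap (thm_trans h1 (A3 B C)) h2

lemma thm_imp_imp_of {A B X C : Form} (h : ThmCnD n (A.imp (B.imp X)))
    (hX : ThmCnD n (X.imp C)) : ThmCnD n (A.imp (B.imp C)) :=
  thm_trans h (mp (A2 B X C) (thm_of_imp hX))

lemma thm_curry {A B C : Form} (h : ThmCnD n ((A.and B).imp C)) :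
    ThmCnD n (A.imp (B.imp C)) := thm_imp_imp_of (A3 A B) h

/-! ### Conjunction lemmas -/

lemma conj_head (γ : Form) (l : List Form) : ThmCnD n ((conj γ l).imp γ) := by
  cases l with
  | nil => exact thm_id γ
  | cons x l => exact A4 γ (conj x l)

lemma conj_proj {δ γ : Form} {l : List Form} (h : δ ∈ γ :: l) :
    ThmCnD n ((conj γ l).imp δ) := by
  induction l generalizing γ with
  | nil => simp at h; subst h; exact thm_id _
  | cons x l ih =>
    rcases List.mem_cons.mp h with h | h
    · subst h; exact A4 _ (conj x l)
    · exact thm_trans (A5 γ (conj x l)) (ih h)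

lemma conj_intro {D γ : Form} {l : List Form} (h : ∀ δ ∈ γ :: l, ThmCnD n (D.imp δ)) :
    ThmCnD n (D.imp (conj γ l)) := by
  induction l generalizing γ with
  | nil => exact h γ (by simp)
  | cons x l ih =>
    exact thm_and_intro (h γ (by simp))
      (ih fun δ hδ => h δ (by simp at hδ ⊢; tauto))

lemma conj_append_left (γ : Form) (l l' : List Form) :
    ThmCnD n ((conj γ (l ++ l')).imp (conj γ l)) := by
  induction l generalizing γ with
  | nil => exact conj_head γ l'
  | cons x l ih =>
    exact thm_and_intro (A4 _ _) (thm_trans (A5 _ _) (ih x))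

lemma conj_append_right (γ δ : Form) (l m : List Form) :
    ThmCnD n ((conj γ (l ++ δ :: m)).imp (conj δ m)) := by
  induction l generalizing γ with
  | nil => exact A5 γ (conj δ m)
  | cons x l ih => exact thm_trans (A5 γ _) (ih x)

/-! ### Derivability lemmas -/

lemma deriv_of_thm {Γ : Set Form} {φ : Form} (h : ThmCnD n φ) : DerivCnD n Γ φ := Or.inl h

lemma deriv_mem {Γ : Set Form} {φ : Form} (h : φ ∈ Γ) : DerivCnD n Γ φ :=
  Or.inr ⟨φ, [], by simpa using h, thm_id φ⟩

lemma deriv_mono {Γ Γ' : Set Form} {φ : Form} (hs : Γ ⊆ Γ') (h : DerivCnD n Γ φ) :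
    DerivCnD n Γ' φ := by
  rcases h with h | ⟨γ, l, hm, ht⟩
  · exact Or.inl h
  · exact Or.inr ⟨γ, l, fun δ hδ => hs (hm δ hδ), ht⟩

lemma deriv_mp {Γ : Set Form} {α β : Form} (h1 : DerivCnD n Γ (α.imp β))
    (h2 : DerivCnD n Γ α) : DerivCnD n Γ β := by
  rcases h1 with h1 | ⟨γ, l, hm1, ht1⟩ <;> rcases h2 with h2 | ⟨δ, m, hm2, ht2⟩
  · exact Or.inl (mp h1 h2)
  · exact Or.inr ⟨δ, m, hm2, thm_trans ht2 h1⟩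
  · exact Or.inr ⟨γ, l, hm1, thm_ap ht1 (thm_of_imp h2)⟩
  · refine Or.inr ⟨γ, l ++ δ :: m, ?_, ?_⟩
    · intro x hx
      rcases List.mem_cons.mp hx with rfl | hx
      · exact hm1 x (by simp)
      · rcases List.mem_append.mp hx with hx | hx
        · exact hm1 x (by simp [hx])
        · exact hm2 x hx
    · exact thm_ap (thm_trans (conj_append_left γ l (δ :: m)) ht1)
        (thm_trans (conj_append_right γ δ l m) ht2)

open Classical in
lemma deriv_deduction {Γ : Set Form} {φ χ : Form}
    (h : DerivCnD n (insert φ Γ) χ) : DerivCnD n Γ (φ.imp χ) := by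
  classical
  rcases h with h | ⟨γ, l, hm, ht⟩
  · exact Or.inl (thm_of_imp h)
  · set L := (γ :: l).filter (fun δ => decide (δ ∈ Γ)) with hL
    have hLsub : ∀ δ ∈ L, δ ∈ Γ := by
      intro δ hδ
      have := List.of_mem_filter hδ
      simpa using this
    have hmem : ∀ δ ∈ γ :: l, δ = φ ∨ δ ∈ L := by
      intro δ hδ
      by_cases hδΓ : δ ∈ Γ
      · exact Or.inr (List.mem_filter.mpr ⟨hδ, by simpa⟩)
      · rcases Set.mem_insert_iff.mp (hm δ hδ) with h' | h'
        · exact Or.inl h'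
        · exact absurd h' hδΓ
    rcases hLd : L with _ | ⟨d, m⟩
    · have hall : ∀ δ ∈ γ :: l, δ = φ := by
        intro δ hδ
        rcases hmem δ hδ with h' | h'
        · exact h'
        · rw [hLd] at h'; simp at h'
      refine Or.inl (thm_trans ?_ ht)
      exact conj_intro fun δ hδ => by rw [hall δ hδ]; exact thm_id φ
    · refine Or.inr ⟨d, m, ?_, ?_⟩
      · intro δ hδ; exact hLsub δ (by rw [hLd]; exact hδ)
      · have hX : ThmCnD n (((conj d m).and φ).imp (conj γ l)) := by
          refine conj_intro fun δ hδ => ?_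
          rcases hmem δ hδ with h' | h'
          · rw [h']; exact A5 _ _
          · rw [hLd] at h'
            exact thm_trans (A4 _ _) (conj_proj h')
        exact thm_curry (thm_trans hX ht)

lemma deriv_trans {Γ : Set Form} {a b c : Form} (h1 : DerivCnD n Γ (a.imp b))
    (h2 : DerivCnD n Γ (b.imp c)) : DerivCnD n Γ (a.imp c) := by
  apply deriv_deduction
  exact deriv_mp (deriv_mono (Set.subset_insert _ _) h2)
    (deriv_mp (deriv_mono (Set.subset_insert _ _) h1) (deriv_mem (Set.mem_insert _ _)))

/-! ### Saturated-set lemmas -/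

variable {Δ : Set Form} {ψ : Form}

lemma sat_closed (hs : SaturatedCnD n Δ ψ) {φ : Form} (h : DerivCnD n Δ φ) : φ ∈ Δ := by
  by_contra hφ
  exact hs.1 (deriv_mp (deriv_deduction (hs.2 φ hφ)) h)

lemma sat_thm (hs : SaturatedCnD n Δ ψ) {φ : Form} (h : ThmCnD n φ) : φ ∈ Δ :=
  sat_closed hs (Or.inl h)

lemma sat_mp (hs : SaturatedCnD n Δ ψ) {φ χ : Form} (h1 : φ.imp χ ∈ Δ) (h2 : φ ∈ Δ) :
    χ ∈ Δ := sat_closed hs (deriv_mp (deriv_mem h1) (deriv_mem h2))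

lemma sat_imp_psi (hs : SaturatedCnD n Δ ψ) {φ : Form} (h : φ ∉ Δ) :
    DerivCnD n Δ (φ.imp ψ) := deriv_deduction (hs.2 φ h)

lemma sat_and (hs : SaturatedCnD n Δ ψ) {α β : Form} :
    α.and β ∈ Δ ↔ α ∈ Δ ∧ β ∈ Δ :=
  ⟨fun h => ⟨sat_mp hs (sat_thm hs (A4 α β)) h, sat_mp hs (sat_thm hs (A5 α β)) h⟩,
   fun ⟨h1, h2⟩ => sat_mp hs (sat_mp hs (sat_thm hs (A3 α β)) h1) h2⟩

lemma sat_or (hs : SaturatedCnD n Δ ψ) {α β : Form} :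
    α.or β ∈ Δ ↔ α ∈ Δ ∨ β ∈ Δ := by
  constructor
  · intro h; by_contra hc; push_neg at hc
    exact hs.1 (deriv_mp (deriv_mp (deriv_mp (deriv_of_thm (A8 α β ψ))
      (sat_imp_psi hs hc.1)) (sat_imp_psi hs hc.2)) (deriv_mem h))
  · rintro (h | h)
    · exact sat_mp hs (sat_thm hs (A6 α β)) h
    · exact sat_mp hs (sat_thm hs (A7 α β)) h

lemma sat_imp (hs : SaturatedCnD n Δ ψ) {α β : Form} :
    α.imp β ∈ Δ ↔ (α ∉ Δ ∨ β ∈ Δ) := by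
  constructor
  · intro h
    by_cases hα : α ∈ Δ
    · exact Or.inr (sat_mp hs h hα)
    · exact Or.inl hα
  · rintro (h | h)
    · by_contra hni
      have h1 : DerivCnD n Δ (α.imp ψ) := sat_imp_psi hs h
      have h2 : DerivCnD n Δ ((α.imp β).imp ψ) := sat_imp_psi hs hni
      have hP : DerivCnD n Δ ((ψ.imp β).imp ψ) := by
        apply deriv_deduction
        have hyp : DerivCnD n (insert (ψ.imp β) Δ) (ψ.imp β) :=
          deriv_mem (Set.mem_insert _ _)
        have hαβ : DerivCnD n (insert (ψ.imp β) Δ) (α.imp β) :=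
          deriv_trans (deriv_mono (Set.subset_insert _ _) h1) hyp
        exact deriv_mp (deriv_mono (Set.subset_insert _ _) h2) hαβ
      exact hs.1 (deriv_mp (deriv_of_thm (A9 ψ β)) hP)
    · exact sat_mp hs (sat_thm hs (A1 β α)) h

lemma sat_neg (hs : SaturatedCnD n Δ ψ) {α : Form} (h : α ∉ Δ) : α.neg ∈ Δ := by
  by_contra hn
  exact hs.1 (deriv_mp (deriv_mp (deriv_mp (deriv_of_thm (A8 α α.neg ψ))
    (sat_imp_psi hs h)) (sat_imp_psi hs hn)) (deriv_of_thm (EM α)))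

lemma sat_pow1 (hs : SaturatedCnD n Δ ψ) {α : Form} (h : α ∉ Δ ∨ α.neg ∉ Δ) :
    α.pow 1 ∈ Δ ∧ (α.pow 1).neg ∉ Δ := by
  have hp : α.pow 1 = (α.and α.neg).neg := rfl
  have hna : α.and α.neg ∉ Δ := fun hc => by
    rcases (sat_and hs).mp hc with ⟨h1, h2⟩; tauto
  constructor
  · rw [hp]; exact sat_neg hs hna
  · rw [hp]; intro hc
    exact hna (sat_mp hs (sat_thm hs (cf (α.and α.neg))) hc)

lemma sat_pow_up (hs : SaturatedCnD n Δ ψ) {α : Form} {k : ℕ}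
    (h : α.pow k ∉ Δ ∨ (α.pow k).neg ∉ Δ) :
    ∀ m, k < m → α.pow m ∈ Δ ∧ (α.pow m).neg ∉ Δ := by
  intro m hm
  induction m with
  | zero => omega
  | succ m ih =>
    have hstep : ∀ γ : Form, (γ ∉ Δ ∨ γ.neg ∉ Δ) →
        ((γ.and γ.neg).neg ∈ Δ ∧ ((γ.and γ.neg).neg).neg ∉ Δ) := fun γ hγ => sat_pow1 hs hγ
    have hpow : α.pow (m + 1) = ((α.pow m).and (α.pow m).neg).neg := rfl
    rcases Nat.lt_succ_iff_lt_or_eq.mp hm with hm' | hm'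
    · have := ih hm'
      rw [hpow]
      exact hstep (α.pow m) (Or.inr this.2)
    · subst hm'
      rw [hpow]
      exact hstep (α.pow k) h

lemma sat_item7 (hs : SaturatedCnD n Δ ψ) {α : Form} :
    ∀ i, 1 ≤ i → i ≤ n → α.pow i ∉ Δ →
      ∀ j, 1 ≤ j → j ≤ n → j ≠ i → α.pow j ∈ Δ := by
  intro i _ _ hi j _ _ hji
  rcases lt_or_gt_of_ne hji with h | h
  · by_contra hj
    exact hi (sat_pow_up hs (Or.inl hj) i h).1
  · exact (sat_pow_up hs (Or.inl hi) j h).1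

lemma sat_bigPow_iff (hs : SaturatedCnD n Δ ψ) (α : Form) :
    ∀ m, 1 ≤ m → (α.bigPow m ∈ Δ ↔ ∀ k, 1 ≤ k → k ≤ m → α.pow k ∈ Δ) := by
  intro m hm
  induction m with
  | zero => omega
  | succ m ih =>
    cases m with
    | zero =>
      show α.pow 1 ∈ Δ ↔ _
      constructor
      · intro h k h1 h2
        have : k = 1 := by omega
        subst this; exact h
      · intro h; exact h 1 le_rfl le_rfl
    | succ m' =>
      have hb : α.bigPow (m' + 2) = (α.bigPow (m' + 1)).and (α.pow (m' + 2)) := rfl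
      rw [hb, sat_and hs, ih (by omega)]
      constructor
      · rintro ⟨h1, h2⟩ k hk1 hk2
        by_cases hk : k ≤ m' + 1
        · exact h1 k hk1 hk
        · have : k = m' + 2 := by omega
          subst this; exact h2
      · intro h
        exact ⟨fun k a b => h k a (by omega), h (m' + 2) (by omega) le_rfl⟩

lemma sat_item8 (hs : SaturatedCnD n Δ ψ) (hn : 1 ≤ n) {α : Form}
    (hα : α ∈ Δ) (hnα : α.neg ∈ Δ) :
    ∃! k, 1 ≤ k ∧ k ≤ n ∧ α.pow k ∉ Δ := by
  have hex : ∃ k, 1 ≤ k ∧ k ≤ n ∧ α.pow k ∉ Δ := by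
    by_contra hc; push_neg at hc
    have hbig : α.bigPow n ∈ Δ := (sat_bigPow_iff hs α n hn).mpr hc
    exact hs.1 (deriv_mp (deriv_mp (deriv_mp (deriv_of_thm (bcn α ψ))
      (deriv_mem hbig)) (deriv_mem hα)) (deriv_mem hnα))
  obtain ⟨k, hk⟩ := hex
  refine ⟨k, hk, fun j hj => ?_⟩
  by_contra hjk
  exact hj.2.2 (sat_item7 hs k hk.1 hk.2.1 hk.2.2 j hj.1 hj.2.1 hjk)

lemma sat_item9 (hs : SaturatedCnD n Δ ψ) (hn : 1 ≤ n) {α : Form} :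
    α.bigPow n ∈ Δ ↔ (α ∉ Δ ∨ α.neg ∉ Δ) := by
  constructor
  · intro h; by_contra hc; push_neg at hc
    obtain ⟨k, ⟨hk1, hk2, hk3⟩, _⟩ := sat_item8 hs hn hc.1 hc.2
    exact hk3 ((sat_bigPow_iff hs α n hn).mp h k hk1 hk2)
  · intro h
    have h1 := sat_pow1 hs h
    refine (sat_bigPow_iff hs α n hn).mpr fun k hk1 _ => ?_
    rcases eq_or_lt_of_le hk1 with h' | h'
    · rw [← h']; exact h1.1
    · exact (sat_pow_up hs (Or.inr h1.2) k h').1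

/-! ### Obligation and the canonical relation -/

lemma deriv_obl_conj {Γ : Set Form} {γ : Form} {l : List Form}
    (h : ∀ δ ∈ γ :: l, δ.obl ∈ Γ) : DerivCnD n Γ (conj γ l).obl := by
  induction l generalizing γ with
  | nil => exact deriv_mem (h γ (by simp))
  | cons x l ih =>
    have h1 : DerivCnD n Γ (conj x l).obl := ih fun δ hδ => h δ (by simp at hδ ⊢; tauto)
    have h2 : DerivCnD n Γ γ.obl := deriv_mem (h γ (by simp))
    have t1 : ThmCnD n (γ.obl.imp ((conj x l).imp (γ.and (conj x l))).obl) :=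
      mp (OK γ ((conj x l).imp (γ.and (conj x l)))) (nec (A3 γ (conj x l)))
    have h3 := deriv_mp (deriv_of_thm t1) h2
    exact deriv_mp (deriv_mp (deriv_of_thm (OK (conj x l) (γ.and (conj x l)))) h3) h1

lemma lindenbaum {Γ : Set Form} {α : Form} (h : ¬ DerivCnD n Γ α) :
    ∃ Θ, Γ ⊆ Θ ∧ SaturatedCnD n Θ α := by
  have hZ : ∀ c ⊆ {Γ' : Set Form | ¬ DerivCnD n Γ' α}, IsChain (· ⊆ ·) c → c.Nonempty →
      ∃ ub ∈ {Γ' : Set Form | ¬ DerivCnD n Γ' α}, ∀ s ∈ c, s ⊆ ub := by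
    intro c hcS hchain hcne
    refine ⟨⋃₀ c, ?_, fun s hs => Set.subset_sUnion_of_mem hs⟩
    rintro (ht | ⟨γ, l, hm, ht⟩)
    · obtain ⟨t, htc⟩ := hcne
      exact hcS htc (Or.inl ht)
    · have hfind : ∀ L : List Form, (∀ δ ∈ L, δ ∈ ⋃₀ c) → ∃ t ∈ c, ∀ δ ∈ L, δ ∈ t := by
        intro L
        induction L with
        | nil => exact fun _ => ⟨hcne.choose, hcne.choose_spec, by simp⟩
        | cons x L ih =>
          intro hm
          obtain ⟨t, htc, hts⟩ := ih fun δ hδ => hm δ (by simp [hδ])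
          obtain ⟨s, hsc, hxs⟩ := hm x (by simp)
          rcases eq_or_ne t s with rfl | hne
          · exact ⟨t, htc, fun δ hδ => by
              rcases List.mem_cons.mp hδ with rfl | hδ
              · exact hxs
              · exact hts δ hδ⟩
          · rcases hchain htc hsc hne with hts' | hst'
            · exact ⟨s, hsc, fun δ hδ => by
                rcases List.mem_cons.mp hδ with rfl | hδ
                · exact hxs
                · exact hts' (hts δ hδ)⟩
            · exact ⟨t, htc, fun δ hδ => by
                rcases List.mem_cons.mp hδ with rfl | hδ
                · exact hst' hxs
                · exact hts δ hδ⟩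
      obtain ⟨t, htc, hts⟩ := hfind (γ :: l) hm
      exact hcS htc (Or.inr ⟨γ, l, hts, ht⟩)
  obtain ⟨M, hM1, hM2⟩ := zorn_subset_nonempty {Γ' : Set Form | ¬ DerivCnD n Γ' α} hZ Γ h
  refine ⟨M, hM1, hM2.1, fun φ hφ => ?_⟩
  by_contra hc
  have hmem : insert φ M ∈ {Γ' : Set Form | ¬ DerivCnD n Γ' α} := hc
  have := hM2.2 hmem (Set.subset_insert _ _)
  exact hφ (this (Set.mem_insert φ M))

lemma sat_obl (hs : SaturatedCnD n Δ ψ) {α : Form} :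
    α.obl ∈ Δ ↔ ∀ Θ ∈ WcanCnD n, RcanCnD Δ Θ → α ∈ Θ := by
  constructor
  · intro h Θ _ hR; exact hR α h
  · intro h; by_contra hO
    have hnd : ¬ DerivCnD n {φ : Form | φ.obl ∈ Δ} α := by
      rintro (ht | ⟨γ, l, hm, ht⟩)
      · exact hO (sat_thm hs (nec ht))
      · have h1 : DerivCnD n Δ (conj γ l).obl := deriv_obl_conj fun δ hδ => hm δ hδ
        have h2 : ThmCnD n ((conj γ l).obl.imp α.obl) := mp (OK _ _) (nec ht)
        exact hO (sat_closed hs (deriv_mp (deriv_of_thm h2) h1))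
    obtain ⟨Θ, hsub, hsat⟩ := lindenbaum hnd
    have hαΘ := h Θ ⟨α, hsat⟩ fun φ hφ => hsub hφ
    exact hsat.1 (deriv_mem hαΘ)

end Machinery

/-- Truth Lemma for C_nᴰ: properties of ψ-saturated sets in C_nᴰ, n ≥ 2. -/
theorem truth_lemma_CnD (n : ℕ) (hn : 2 ≤ n) (Δ : Set Form) (hΔ : Δ ∈ WcanCnD n) :
    ∀ α β : Form,
      (α.and β ∈ Δ ↔ α ∈ Δ ∧ β ∈ Δ) ∧
      (α.or β ∈ Δ ↔ α ∈ Δ ∨ β ∈ Δ) ∧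
      (α.imp β ∈ Δ ↔ α ∉ Δ ∨ β ∈ Δ) ∧
      (α ∉ Δ → α.neg ∈ Δ) ∧
      (α.neg.neg ∈ Δ → α ∈ Δ) ∧
      ((α ∉ Δ ∨ α.neg ∉ Δ) → α.pow 1 ∈ Δ ∧ (α.pow 1).neg ∉ Δ) ∧
      (α ∈ Δ → α.neg ∈ Δ → ∀ i : ℕ, 1 ≤ i → i ≤ n → α.pow i ∉ Δ →
        ∀ j : ℕ, 1 ≤ j → j ≤ n → j ≠ i → α.pow j ∈ Δ) ∧
      (α ∈ Δ → α.neg ∈ Δ → ∃! k : ℕ, 1 ≤ k ∧ k ≤ n ∧ α.pow k ∉ Δ) ∧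
      (α.bigPow n ∈ Δ ↔ (α ∉ Δ ∨ α.neg ∉ Δ)) ∧
      (α.obl ∈ Δ ↔ ∀ Θ ∈ WcanCnD n, RcanCnD Δ Θ → α ∈ Θ) ∧
      (α.bigPow n ∈ Δ → α.obl.bigPow n ∈ Δ) := by
  obtain ⟨ψ, hs⟩ := hΔ
  have hn1 : 1 ≤ n := by omega
  intro α β
  refine ⟨sat_and hs, sat_or hs, sat_imp hs, sat_neg hs,
    fun h => sat_mp hs (sat_thm hs (ThmCnD.cf α)) h,
    sat_pow1 hs, fun _ _ => sat_item7 hs, sat_item8 hs hn1, sat_item9 hs hn1,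
    sat_obl hs, fun h => sat_mp hs (sat_thm hs (ThmCnD.POn α)) h⟩
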